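/- For the 1-d heat kernel G(t,x) = (4πdt)^{−1/2} e^{−x²/(4dt)} with d > 0, and the image-series Green function G̃(t,x;τ,ξ) = Σ_{n∈ℤ} (−1)ⁿ G(t−τ, x−ξ−2nL) on the interval (−L, L), for every ε1 ∈ (0,1) there exists T0 ≥ 1 such that for all L ≥ T0 one has ∫_{−L}^{L} G̃(t,x;τ,ξ) dξ ≥ 1 − (4/√π) e^{−L/(2√d)} for all 0 < t−τ ≤ ε1² L/(4√d) and |x| ≤ (1−ε1) L. -/

import Mathlib

open MeasureTheory Real Set
open scoped ENNReal NNReal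

lemma gaussAux_integrable {k : ℝ} (hk : 0 < k) :
    Integrable (fun y : ℝ => (Real.sqrt (Real.pi * k))⁻¹ * Real.exp (-y ^ 2 / k)) := by
  have h := (integrable_exp_neg_mul_sq (b := k⁻¹) (by positivity)).const_mul
      (Real.sqrt (Real.pi * k))⁻¹
  refine h.congr ?_
  filter_upwards with y
  rw [show -k⁻¹ * y ^ 2 = -y ^ 2 / k by ring]

lemma gaussAux_integral {k : ℝ} (hk : 0 < k) :
    ∫ y : ℝ, (Real.sqrt (Real.pi * k))⁻¹ * Real.exp (-y ^ 2 / k) = 1 := by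
  have h1 : ∫ y : ℝ, Real.exp (-y ^ 2 / k) = Real.sqrt (Real.pi * k) := by
    have := integral_gaussian k⁻¹
    simp only [show ∀ y : ℝ, -k⁻¹ * y ^ 2 = -y ^ 2 / k from fun y => by ring] at this
    rwa [show Real.pi / k⁻¹ = Real.pi * k by field_simp] at this
  rw [integral_const_mul, h1, inv_mul_cancel₀]
  exact Real.sqrt_ne_zero'.mpr (by positivity)

lemma gaussAux_tail {k : ℝ} (hk : 0 < k) {S : Set ℝ} (hS : MeasurableSet S) {a : ℝ}
    (ha : ∀ y ∈ S, a ^ 2 ≤ y ^ 2) :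
    ∫ y in S, (Real.sqrt (Real.pi * k))⁻¹ * Real.exp (-y ^ 2 / k)
      ≤ 2 * Real.exp (-(3 * a ^ 2) / (4 * k)) := by
  set c := (Real.sqrt (Real.pi * k))⁻¹ with hc_def
  have hc : 0 ≤ c := by positivity
  set E0 := Real.exp (-(3 * a ^ 2) / (4 * k)) with hE0_def
  have hint4 : Integrable (fun y : ℝ => Real.exp (-y ^ 2 / (4 * k))) := by
    have h := integrable_exp_neg_mul_sq (b := (4 * k)⁻¹) (by positivity)
    refine h.congr ?_
    filter_upwards with y
    rw [show -(4 * k)⁻¹ * y ^ 2 = -y ^ 2 / (4 * k) by ring]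
  have hint_h : Integrable (fun y : ℝ => c * (E0 * Real.exp (-y ^ 2 / (4 * k)))) :=
    (hint4.const_mul E0).const_mul c
  have hmono : ∀ y ∈ S, c * Real.exp (-y ^ 2 / k)
      ≤ c * (E0 * Real.exp (-y ^ 2 / (4 * k))) := by
    intro y hy
    refine mul_le_mul_of_nonneg_left ?_ hc
    rw [hE0_def, ← Real.exp_add]
    apply Real.exp_le_exp.mpr
    have h1 := ha y hy
    rw [div_add_div _ _ (by positivity) (by positivity),
      div_le_div_iff₀ (by positivity) (by positivity)]
    nlinarith [hk.le, sq_nonneg y, sq_nonneg a]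
  calc ∫ y in S, c * Real.exp (-y ^ 2 / k)
      ≤ ∫ y in S, c * (E0 * Real.exp (-y ^ 2 / (4 * k))) := by
        apply setIntegral_mono_on ((gaussAux_integrable hk).integrableOn) hint_h.integrableOn hS hmono
    _ ≤ ∫ y : ℝ, c * (E0 * Real.exp (-y ^ 2 / (4 * k))) := by
        apply setIntegral_le_integral hint_h
        filter_upwards with y; positivity
    _ = c * (E0 * ∫ y : ℝ, Real.exp (-y ^ 2 / (4 * k))) := by
        rw [integral_const_mul, integral_const_mul]
    _ = 2 * E0 := by
        have h1 : ∫ y : ℝ, Real.exp (-y ^ 2 / (4 * k)) = 2 * Real.sqrt (Real.pi * k) := by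
          have := integral_gaussian (4 * k)⁻¹
          simp only [show ∀ y : ℝ, -(4 * k)⁻¹ * y ^ 2 = -y ^ 2 / (4 * k) from fun y => by ring] at this
          rw [show Real.pi / (4 * k)⁻¹ = 2 ^ 2 * (Real.pi * k) by field_simp; ring] at this
          rwa [Real.sqrt_mul (by positivity), Real.sqrt_sq (by norm_num)] at this
        rw [h1, hc_def]
        have hs : Real.sqrt (Real.pi * k) ≠ 0 := Real.sqrt_ne_zero'.mpr (by positivity)
        field_simp

private lemma aux_quad {ε1 L k M : ℝ} (hε0 : 0 < ε1) (hk : 0 < k) (hM1 : 1 ≤ M)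
    (hu : M ≤ ε1 ^ 2 * (L ^ 2 / k)) (hu2 : M ≤ L ^ 2 / k) (j : ℕ) :
    3 / 4 * M + (j:ℝ) ≤ 3 / 4 * ((ε1 + 2 * j) ^ 2 * (L ^ 2 / k)) := by
  have hj : (0:ℝ) ≤ (j : ℝ) := Nat.cast_nonneg j
  have hexpand : ε1 ^ 2 + 4 * (j:ℝ) ^ 2 ≤ (ε1 + 2 * j) ^ 2 := by
    nlinarith [mul_nonneg hε0.le hj]
  have hupos : (0:ℝ) ≤ L ^ 2 / k := div_nonneg (sq_nonneg L) hk.le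
  have h3 : 3 / 4 * (ε1 ^ 2 * (L ^ 2 / k)) + 3 * (j:ℝ) ^ 2 * (L ^ 2 / k)
      ≤ 3 / 4 * ((ε1 + 2 * j) ^ 2 * (L ^ 2 / k)) := by
    have h6 := mul_le_mul_of_nonneg_right hexpand hupos
    nlinarith [h6]
  have hj1 : (j:ℝ) ≤ (j:ℝ) ^ 2 := by
    exact_mod_cast Nat.le_self_pow two_ne_zero j
  have h4 : (j:ℝ) ≤ 3 * (j:ℝ) ^ 2 * (L ^ 2 / k) := by
    have h5 : (j:ℝ) ^ 2 * 1 ≤ (j:ℝ) ^ 2 * (L ^ 2 / k) :=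
      mul_le_mul_of_nonneg_left (le_trans hM1 hu2) (sq_nonneg _)
    nlinarith [hj1, h5]
  linarith [hu, h3, h4]

private lemma aux_sq_le_left {b y : ℝ} (hb : 0 ≤ b) (h : b ≤ -y) : b ^ 2 ≤ y ^ 2 := by
  nlinarith

private lemma aux_sq_le_right {b y : ℝ} (hb : 0 ≤ b) (h : b ≤ y) : b ^ 2 ≤ y ^ 2 := by
  nlinarith

private lemma aux_exp_le_geom (j : ℕ) : Real.exp (-(j : ℝ)) = Real.exp (-1) ^ j := by
  rw [← Real.exp_nat_mul]
  norm_num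

private lemma aux_geom_summable (E : ℝ) : Summable (fun j : ℕ => 2 * (E * Real.exp (-(j:ℝ)))) := by
  simp only [aux_exp_le_geom]
  apply Summable.mul_left
  apply Summable.mul_left
  exact summable_geometric_of_lt_one (Real.exp_pos _).le
    (Real.exp_lt_one_iff.mpr (by norm_num))

private lemma aux_geom_tsum {E : ℝ} (hE : 0 ≤ E) :
    ∑' j : ℕ, 2 * (E * Real.exp (-(j:ℝ))) ≤ 4 * E := by
  simp only [aux_exp_le_geom]
  rw [show (fun j : ℕ => 2 * (E * Real.exp (-1) ^ j)) = fun j : ℕ => 2 * E * Real.exp (-1) ^ j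
    from funext fun j => by ring, tsum_mul_left,
    tsum_geometric_of_lt_one (Real.exp_pos _).le (Real.exp_lt_one_iff.mpr (by norm_num))]
  have he : Real.exp (-1) ≤ 1 / 2 := by
    rw [Real.exp_neg]
    rw [inv_le_comm₀ (Real.exp_pos 1) (by norm_num)]
    have := Real.exp_one_gt_d9
    linarith
  have h2 : (1 - Real.exp (-1))⁻¹ ≤ 2 := by
    rw [inv_le_comm₀ (by linarith [Real.exp_pos (-1)]) (by norm_num)]
    linarith
  calc 2 * E * (1 - Real.exp (-1))⁻¹ ≤ 2 * E * 2 := by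
        apply mul_le_mul_of_nonneg_left h2 (by linarith)
    _ = 4 * E := by ring

private lemma aux_exp_two : Real.exp (-2 : ℝ) ≤ 1 / 6 := by
  rw [Real.exp_neg, inv_le_comm₀ (Real.exp_pos 2) (by norm_num)]
  rw [show (2:ℝ) = 1 + 1 by norm_num, Real.exp_add]
  have := Real.exp_one_gt_d9
  nlinarith

private lemma aux_sqrt_pi_le_two : Real.sqrt Real.pi ≤ 2 := by
  rw [show (2:ℝ) = Real.sqrt 4 by
    rw [show (4:ℝ) = 2 ^ 2 by norm_num, Real.sqrt_sq (by norm_num)]]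
  exact Real.sqrt_le_sqrt Real.pi_le_four

private lemma aux_zpow_neg_one_abs (n : ℤ) : |(-1 : ℝ) ^ n| = 1 := by
  rcases Int.even_or_odd n with h | h
  · rw [h.neg_zpow, one_zpow, abs_one]
  · rw [h.neg_zpow, abs_neg, one_zpow, abs_one]

/-- The one-dimensional heat kernel with diffusion coefficient `d`. -/
noncomputable def heatKernel (d t x : ℝ) : ℝ :=
  (Real.sqrt (4 * Real.pi * d * t))⁻¹ * Real.exp (-x ^ 2 / (4 * d * t))

/-- Quantitative lower bound on the Dirichlet heat-semigroup mass given by the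
image-series Green function on `(−L, L)`. -/
theorem stmt7 (d : ℝ) (hd : 0 < d) :
    ∀ ε1 ∈ Set.Ioo (0:ℝ) 1, ∃ T0 ≥ (1:ℝ), ∀ L, T0 ≤ L → ∀ t τ x : ℝ,
      0 < t - τ → t - τ ≤ ε1 ^ 2 * L / (4 * Real.sqrt d) → |x| ≤ (1 - ε1) * L →
      (∫ ξ in (-L)..L, ∑' n : ℤ,
          ((-1 : ℝ) ^ n) * heatKernel d (t - τ) (x - ξ - 2 * (n : ℝ) * L))
        ≥ 1 - (4 / Real.sqrt Real.pi) * Real.exp (-L / (2 * Real.sqrt d)) := by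
  rintro ε1 ⟨hε0, hε11⟩
  refine ⟨max 1 (8 * Real.sqrt d), le_max_left _ _, ?_⟩
  intro L hL t τ x hs hsk hx
  have hsd : 0 < Real.sqrt d := Real.sqrt_pos.mpr hd
  have hdd : Real.sqrt d * Real.sqrt d = d := Real.mul_self_sqrt hd.le
  have hL1 : 1 ≤ L := le_trans (le_max_left _ _) hL
  have hL8 : 8 * Real.sqrt d ≤ L := le_trans (le_max_right _ _) hL
  have hL0 : 0 < L := lt_of_lt_of_le one_pos hL1
  set s := t - τ with hs_def
  set k := 4 * d * s with hk_def
  have hk : 0 < k := by positivity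
  set M := L / Real.sqrt d with hM_def
  have hM8 : 8 ≤ M := (le_div_iff₀ hsd).mpr (by linarith)
  have hM1 : 1 ≤ M := by linarith
  have hsk' : s ≤ ε1 ^ 2 * L / (4 * Real.sqrt d) := hsk
  clear_value s k M
  -- the Gaussian
  set c : ℝ := (Real.sqrt (Real.pi * k))⁻¹ with hc_def
  set g : ℝ → ℝ := fun y => c * Real.exp (-y ^ 2 / k) with hg_def
  have hgheat : ∀ y, heatKernel d s y = g y := by
    intro y
    rw [heatKernel, hg_def, hc_def, hk_def, show 4 * Real.pi * d * s = Real.pi * (4 * d * s) by ring]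
  have hg_int : Integrable g := gaussAux_integrable hk
  have hg_nonneg : ∀ y, 0 ≤ g y := fun y => by rw [hg_def]; positivity
  have hg_total : ∫ y : ℝ, g y = 1 := gaussAux_integral hk
  -- key size estimate : k ≤ ε1^2 * L * √d
  have hkle : k ≤ ε1 ^ 2 * L * Real.sqrt d := by
    have h2 := mul_le_mul_of_nonneg_left hsk (by positivity : (0:ℝ) ≤ 4 * d)
    calc k = 4 * d * s := hk_def
      _ ≤ 4 * d * (ε1 ^ 2 * L / (4 * Real.sqrt d)) := h2
      _ = ε1 ^ 2 * L * Real.sqrt d := by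
          field_simp
          linear_combination (-1 : ℝ) * hdd
  have hu : M ≤ ε1 ^ 2 * (L ^ 2 / k) := by
    rw [hM_def, show ε1 ^ 2 * (L ^ 2 / k) = ε1 ^ 2 * L ^ 2 / k by ring,
      div_le_div_iff₀ hsd hk]
    calc L * k ≤ L * (ε1 ^ 2 * L * Real.sqrt d) :=
          mul_le_mul_of_nonneg_left hkle hL0.le
      _ = ε1 ^ 2 * L ^ 2 * Real.sqrt d := by ring
  have he1 : ε1 ^ 2 ≤ 1 := by nlinarith
  have hu2 : M ≤ L ^ 2 / k := by
    nlinarith [hu, div_nonneg (sq_nonneg L) hk.le, he1]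
  set E : ℝ := Real.exp (-(3 / 4 * M)) with hE_def
  have hE_pos : 0 < E := Real.exp_pos _
  have hE_le_one : E ≤ 1 := Real.exp_le_one_iff.mpr (by nlinarith)
  have hexp_bound : ∀ j : ℕ, Real.exp (-(3 * ((ε1 + 2 * j) * L) ^ 2) / (4 * k))
      ≤ E * Real.exp (-(j : ℝ)) := by
    intro j
    rw [hE_def, ← Real.exp_add]
    apply Real.exp_le_exp.mpr
    rw [neg_div, ← neg_add, neg_le_neg_iff, show (3 * ((ε1 + 2 * j) * L) ^ 2) / (4 * k)
      = 3 / 4 * ((ε1 + 2 * j) ^ 2 * (L ^ 2 / k)) by field_simp]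
    exact aux_quad hε0 hk hM1 hu hu2 j
  -- the pieces of mass
  set a : ℤ → ℝ := fun n =>
    ∫ y in Ioc (x - 2 * (n:ℝ) * L - L) (x - 2 * (n:ℝ) * L + L), g y with ha_def
  have ha_nonneg : ∀ n, 0 ≤ a n := fun n =>
    setIntegral_nonneg measurableSet_Ioc fun y _ => hg_nonneg y
  have hxle : x ≤ (1 - ε1) * L := (abs_le.mp hx).2
  have hxge : -((1 - ε1) * L) ≤ x := (abs_le.mp hx).1
  -- tail machinery
  have htail : ∀ S : Set ℝ, MeasurableSet S → ∀ j : ℕ,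
      (∀ y ∈ S, ((ε1 + 2 * j) * L) ^ 2 ≤ y ^ 2) →
      ∫ y in S, g y ≤ 2 * (E * Real.exp (-(j:ℝ))) := by
    intro S hS j hsub
    have h1 : ∫ y in S, g y ≤ 2 * Real.exp (-(3 * ((ε1 + 2 * j) * L) ^ 2) / (4 * k)) := by
      simp only [hg_def, hc_def]
      exact gaussAux_tail hk hS hsub
    have h2 := hexp_bound j
    linarith only [h1, h2]
  have ha_pos : ∀ j : ℕ, a ((j:ℤ) + 1) ≤ 2 * (E * Real.exp (-(j:ℝ))) := by
    intro j
    simp only [ha_def]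
    apply htail _ measurableSet_Ioc j
    rintro y ⟨hy1, hy2⟩
    push_cast at hy2
    apply aux_sq_le_left (by positivity)
    have hj : (0:ℝ) ≤ (j:ℝ) := Nat.cast_nonneg j
    have hjL : 0 ≤ (j:ℝ) * L := by positivity
    nlinarith only [hy2, hxle, hjL]
  have ha_neg : ∀ j : ℕ, a (-((j:ℤ) + 1)) ≤ 2 * (E * Real.exp (-(j:ℝ))) := by
    intro j
    simp only [ha_def]
    apply htail _ measurableSet_Ioc j
    rintro y ⟨hy1, hy2⟩
    push_cast at hy1
    apply aux_sq_le_right (by positivity)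
    have hj : (0:ℝ) ≤ (j:ℝ) := Nat.cast_nonneg j
    have hjL : 0 ≤ (j:ℝ) * L := by positivity
    nlinarith only [hy1, hxge, hjL]
  -- the central term
  have ha0 : 1 - 4 * E ≤ a 0 := by
    have h1 : ∫ y in Iic (x - L), g y ≤ 2 * (E * Real.exp (-(0:ℕ):ℝ)) := by
      apply htail _ measurableSet_Iic 0
      intro y hy
      simp only [mem_Iic] at hy
      apply aux_sq_le_left (by positivity)
      push_cast
      nlinarith only [hy, hxle, hε0, hL0]
    have h2 : ∫ y in Ioi (x + L), g y ≤ 2 * (E * Real.exp (-(0:ℕ):ℝ)) := by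
      apply htail _ measurableSet_Ioi 0
      intro y hy
      simp only [mem_Ioi] at hy
      apply aux_sq_le_right (by positivity)
      push_cast
      nlinarith only [hy, hxge, hε0, hL0]
    have hsplit1 : (∫ y in Iic (x - L), g y) + ∫ y in Ioi (x - L), g y = 1 := by
      rw [intervalIntegral.integral_Iic_add_Ioi hg_int.integrableOn hg_int.integrableOn]
      exact hg_total
    have hsplit2 : ∫ y in Ioi (x - L), g y = a 0 + ∫ y in Ioi (x + L), g y := by
      rw [← Ioc_union_Ioi_eq_Ioi (by linarith : x - L ≤ x + L),
        setIntegral_union (Ioc_disjoint_Ioi le_rfl) measurableSet_Ioi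
          hg_int.integrableOn hg_int.integrableOn]
      have h0 : a 0 = ∫ y in Ioc (x - L) (x + L), g y := by
        simp only [ha_def]
        norm_num
      rw [h0]
    have hE0 : Real.exp (-((0:ℕ):ℝ)) = 1 := by norm_num
    rw [hE0] at h1 h2
    linarith only [h1, h2, hsplit1, hsplit2]
  -- summability
  have hgeom := aux_geom_summable E
  have hgeomsum := aux_geom_tsum hE_pos.le
  have hsum_pos : Summable (fun j : ℕ => a ((j:ℤ) + 1)) :=
    Summable.of_nonneg_of_le (fun j => ha_nonneg _) ha_pos hgeom
  have hsum_negnat : Summable (fun j : ℕ => a (-((j:ℤ) + 1))) :=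
    Summable.of_nonneg_of_le (fun j => ha_nonneg _) ha_neg hgeom
  have htsum_pos : ∑' j : ℕ, a ((j:ℤ) + 1) ≤ 4 * E :=
    le_trans (Summable.tsum_le_tsum ha_pos hsum_pos hgeom) hgeomsum
  have htsum_neg : ∑' j : ℕ, a (-((j:ℤ) + 1)) ≤ 4 * E :=
    le_trans (Summable.tsum_le_tsum ha_neg hsum_negnat hgeom) hgeomsum
  have hcast : (fun n : ℕ => a ((n + 1 : ℕ) : ℤ)) = fun n : ℕ => a ((n:ℤ) + 1) :=
    funext fun n => by push_cast; ring_nf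
  have hsum_nat : Summable (fun n : ℕ => a (n : ℤ)) :=
    (summable_nat_add_iff 1).mp (hcast ▸ hsum_pos)
  have hsum_a : Summable a := Summable.of_nat_of_neg_add_one hsum_nat hsum_negnat
  -- the signed series
  set F : ℤ → ℝ := fun n => ((-1 : ℝ) ^ n) * a n with hF_def
  have hFnorm : ∀ n, ‖F n‖ = a n := by
    intro n
    rw [hF_def]
    simp only [Real.norm_eq_abs, abs_mul, aux_zpow_neg_one_abs, one_mul,
      abs_of_nonneg (ha_nonneg n)]
  have hFsum : Summable F :=
    Summable.of_norm_bounded hsum_a fun n => le_of_eq (hFnorm n)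
  -- remainder of the signed series
  have hIsum : Summable (fun n : ℤ => if n = 0 then (0:ℝ) else a n) := by
    apply Summable.of_nonneg_of_le _ _ hsum_a
    · intro n; split; exacts [le_rfl, ha_nonneg n]
    · intro n; split; exacts [ha_nonneg n, le_rfl]
  have hInorm : ∀ n : ℤ, ‖if n = 0 then (0:ℝ) else F n‖ = if n = 0 then (0:ℝ) else a n := by
    intro n; split
    · simp
    · exact hFnorm n
  have habs : |∑' n : ℤ, if n = 0 then (0:ℝ) else F n|
      ≤ ∑' n : ℤ, if n = 0 then (0:ℝ) else a n := by
    calc |∑' n : ℤ, if n = 0 then (0:ℝ) else F n|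
        ≤ ∑' n : ℤ, ‖if n = 0 then (0:ℝ) else F n‖ := by
          rw [← Real.norm_eq_abs]
          apply norm_tsum_le_tsum_norm
          simpa only [funext hInorm] using hIsum
      _ = ∑' n : ℤ, if n = 0 then (0:ℝ) else a n := tsum_congr hInorm
  have hita : ∑' n : ℤ, (if n = 0 then (0:ℝ) else a n) ≤ 8 * E := by
    have hs1 : Summable (fun n : ℕ => if (n:ℤ) = 0 then (0:ℝ) else a (n:ℤ)) := by
      apply Summable.of_nonneg_of_le _ _ hsum_nat
      · intro n; split; exacts [le_rfl, ha_nonneg _]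
      · intro n; split; exacts [ha_nonneg _, le_rfl]
    have hs2 : Summable (fun n : ℕ => if (-((n:ℤ) + 1)) = 0 then (0:ℝ) else a (-((n:ℤ) + 1))) := by
      apply Summable.of_nonneg_of_le _ _ hsum_negnat
      · intro n; split; exacts [le_rfl, ha_nonneg _]
      · intro n; split; exacts [ha_nonneg _, le_rfl]
    rw [tsum_of_nat_of_neg_add_one (f := fun n : ℤ => if n = 0 then (0:ℝ) else a n) hs1 hs2]
    have hp1 : ∑' n : ℕ, (if (n:ℤ) = 0 then (0:ℝ) else a (n:ℤ)) ≤ 4 * E := by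
      rw [Summable.tsum_eq_zero_add hs1]
      have hz : ((0:ℕ):ℤ) = 0 := rfl
      rw [if_pos hz, zero_add]
      have heq : (fun n : ℕ => if ((n+1:ℕ):ℤ) = 0 then (0:ℝ) else a ((n+1:ℕ):ℤ))
          = fun n : ℕ => a ((n:ℤ) + 1) := by
        funext n
        have h : ¬(((n+1:ℕ):ℤ) = 0) := by omega
        rw [if_neg h]
        norm_cast
      rw [heq]
      exact htsum_pos
    have hp2 : ∑' n : ℕ, (if (-((n:ℤ) + 1)) = 0 then (0:ℝ) else a (-((n:ℤ) + 1))) ≤ 4 * E := by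
      have heq : (fun n : ℕ => if (-((n:ℤ) + 1)) = 0 then (0:ℝ) else a (-((n:ℤ) + 1)))
          = fun n : ℕ => a (-((n:ℤ) + 1)) := by
        funext n
        have h : ¬(-((n:ℤ) + 1) = 0) := by omega
        rw [if_neg h]
      rw [heq]
      exact htsum_neg
    linarith only [hp1, hp2]
  have hFbound : 1 - 12 * E ≤ ∑' n : ℤ, F n := by
    have hsplitF : ∑' n : ℤ, F n = F 0 + ∑' n : ℤ, if n = 0 then (0:ℝ) else F n :=
      Summable.tsum_eq_add_tsum_ite hFsum 0
    have hF0 : F 0 = a 0 := by rw [hF_def]; simp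
    have hlow : -(8 * E) ≤ ∑' n : ℤ, if n = 0 then (0:ℝ) else F n :=
      (abs_le.mp (habs.trans hita)).1
    rw [hsplitF, hF0]
    linarith only [ha0, hlow]
  -- identification of the integral with the series
  have hint_an : ∀ n : ℤ, (∫ ξ in Ioc (-L) L, g (x - ξ - 2 * (n:ℝ) * L)) = a n := by
    intro n
    have h1 : (fun ξ => g (x - ξ - 2 * (n:ℝ) * L)) = fun ξ => g ((x - 2 * (n:ℝ) * L) - ξ) := by
      funext ξ; congr 1; ring
    rw [h1, ← intervalIntegral.integral_of_le (by linarith : -L ≤ L),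
      intervalIntegral.integral_comp_sub_left g (x - 2 * (n:ℝ) * L),
      sub_neg_eq_add,
      intervalIntegral.integral_of_le (by linarith : x - 2 * (n:ℝ) * L - L ≤ x - 2 * (n:ℝ) * L + L)]
  have hgcont : Continuous g := by
    rw [hg_def]
    fun_prop
  have hmeas : ∀ n : ℤ, AEStronglyMeasurable
      (fun ξ => ((-1:ℝ) ^ n) * g (x - ξ - 2 * (n:ℝ) * L))
      (volume.restrict (Ioc (-L) L)) := by
    intro n
    apply Continuous.aestronglyMeasurable
    exact continuous_const.mul (hgcont.comp (by fun_prop))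
  have hIntOn : ∀ n : ℤ, IntegrableOn (fun ξ => g (x - ξ - 2 * (n:ℝ) * L)) (Ioc (-L) L) := by
    intro n
    apply Integrable.integrableOn
    have h1 : (fun ξ => g (x - ξ - 2 * (n:ℝ) * L)) = fun ξ => g ((x - 2 * (n:ℝ) * L) - ξ) := by
      funext ξ; congr 1; ring
    rw [h1]
    exact (integrable_comp_sub_left g (x - 2 * (n:ℝ) * L)).mpr hg_int
  have hlint : ∑' n : ℤ, ∫⁻ ξ in Ioc (-L) L,
      ‖((-1:ℝ) ^ n) * g (x - ξ - 2 * (n:ℝ) * L)‖₊ ≠ ⊤ := by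
    have hterm : ∀ n : ℤ, (∫⁻ ξ in Ioc (-L) L, ‖((-1:ℝ) ^ n) * g (x - ξ - 2 * (n:ℝ) * L)‖₊)
        = ENNReal.ofReal (a n) := by
      intro n
      have heq : (fun ξ => (‖((-1:ℝ) ^ n) * g (x - ξ - 2 * (n:ℝ) * L)‖₊ : ℝ≥0∞))
          = fun ξ => ENNReal.ofReal (g (x - ξ - 2 * (n:ℝ) * L)) := by
        funext ξ
        rw [← enorm_eq_nnnorm, ← ofReal_norm, Real.norm_eq_abs, abs_mul, aux_zpow_neg_one_abs,
          one_mul, abs_of_nonneg (hg_nonneg _)]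
      rw [heq, ← ofReal_integral_eq_lintegral_ofReal (hIntOn n)
        (Filter.Eventually.of_forall fun ξ => hg_nonneg _), hint_an n]
    simp only [hterm]
    rw [← ENNReal.ofReal_tsum_of_nonneg ha_nonneg hsum_a]
    exact ENNReal.ofReal_ne_top
  have key : (∫ ξ in (-L)..L, ∑' n : ℤ,
      ((-1 : ℝ) ^ n) * heatKernel d s (x - ξ - 2 * (n : ℝ) * L)) = ∑' n : ℤ, F n := by
    simp only [hgheat]
    rw [intervalIntegral.integral_of_le (by linarith : -L ≤ L)]
    rw [integral_tsum hmeas hlint]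
    refine tsum_congr fun n => ?_
    rw [integral_const_mul, hint_an n, hF_def]
  -- final numerics
  have hnum : 12 * E ≤ (4 / Real.sqrt Real.pi) * Real.exp (-L / (2 * Real.sqrt d)) := by
    have hLM : -L / (2 * Real.sqrt d) = -(M / 2) := by
      rw [hM_def, div_div, neg_div, mul_comm (Real.sqrt d) 2]
    have hsplitE : E = Real.exp (-(M / 4)) * Real.exp (-(M / 2)) := by
      rw [hE_def, ← Real.exp_add]
      ring_nf
    have h1 : Real.exp (-(M / 4)) ≤ Real.exp (-2 : ℝ) :=
      Real.exp_le_exp.mpr (by linarith only [hM8])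
    have h2 : Real.exp (-(M / 4)) ≤ 1 / 6 := h1.trans aux_exp_two
    have h3 : (2:ℝ) ≤ 4 / Real.sqrt Real.pi := by
      rw [le_div_iff₀ (Real.sqrt_pos.mpr Real.pi_pos)]
      nlinarith only [aux_sqrt_pi_le_two, Real.sqrt_pos.mpr Real.pi_pos]
    rw [hLM, hsplitE]
    have hep : (0:ℝ) < Real.exp (-(M / 2)) := Real.exp_pos _
    nlinarith only [h2, h3, hep, Real.exp_pos (-(M / 4))]
  rw [ge_iff_le, key]
  linarith only [hFbound, hnum]
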